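/- Theorem 2 (DoF converse, combinatorial form): let r ≥ 1 and M ≥ 1 be integers and let d : V(r) → ℕ satisfy d_v ≤ M for every v ∈ V(r) and d_u + d_v ≤ M for every edge {u,v} ∈ E(r). Then the average (1/|V(r)|)·Σ_{v ∈ V(r)} d_v is at most M/2 + 7M/√(|V(r)|) when M is even, and at most M/2 − 1/6 + 7M/√(|V(r)|) when M is odd; equivalently, (1/|V(r)|)·Σ_{v} d_v ≤ ⌊3M/2⌋/3 + 7M/√(|V(r)|) as real numbers. -/

import Mathlib

/-- Vertex set of the cellular interference graph: pairs `(a,b)` identified with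
the Eisenstein integer `a + bω`, where `ω = (−1+i√3)/2`, satisfying
`|Re(a+bω)| ≤ r` and `|Im(a+bω)| ≤ (√3/2)r`, i.e. `|2a − b| ≤ 2r` and `|b| ≤ r`. -/
noncomputable def V (r : ℤ) : Finset (ℤ × ℤ) :=
  (Finset.Icc (-(2 * r)) (2 * r) ×ˢ Finset.Icc (-r) r).filter
    (fun p => |2 * p.1 - p.2| ≤ 2 * r ∧ |p.2| ≤ r)

/-- `f(a,b) = (a+b) mod 3`. -/
def f (p : ℤ × ℤ) : ℤ := (p.1 + p.2) % 3

/-- Triangle index set: `(a,b)` with `f(a,b) ≠ 0` such that all three points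
`(a,b)`, `(a,b+1)`, `(a+1,b+1)` lie in `V r`. -/
noncomputable def T (r : ℤ) : Finset (ℤ × ℤ) :=
  (V r).filter (fun p => f p ≠ 0 ∧ (p.1, p.2 + 1) ∈ V r ∧ (p.1 + 1, p.2 + 1) ∈ V r)

/-- The vertex set of the triangle indexed by `p = (a,b)`:
`{(a,b), (a,b+1), (a+1,b+1)}`. -/
def triVerts (p : ℤ × ℤ) : Finset (ℤ × ℤ) := {p, (p.1, p.2 + 1), (p.1 + 1, p.2 + 1)}

/-- The number `n_v` of triangles of `T r` whose vertex set contains `v`. -/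
noncomputable def nTri (r : ℤ) (v : ℤ × ℤ) : ℕ := ((T r).filter (fun p => v ∈ triVerts p)).card

/-- The boundary vertices: those belonging to fewer than two triangles. -/
noncomputable def Vex (r : ℤ) : Finset (ℤ × ℤ) := (V r).filter (fun v => nTri r v < 2)

/-- Adjacency (edge) relation of the cellular interference graph: `{u,v}` is an
edge iff `u, v ∈ V r` and there is `(a,b) ∈ ℤ²` with `(a+b) mod 3 ≠ 0` such that
`{u,v}` is one of `{(a,b),(a,b+1)}`, `{(a,b),(a+1,b+1)}`, `{(a,b+1),(a+1,b+1)}`. -/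
def Adj (r : ℤ) (u v : ℤ × ℤ) : Prop :=
  u ∈ V r ∧ v ∈ V r ∧ ∃ a b : ℤ, (a + b) % 3 ≠ 0 ∧
    ( ({u, v} : Set (ℤ × ℤ)) = {(a, b), (a, b + 1)} ∨
      ({u, v} : Set (ℤ × ℤ)) = {(a, b), (a + 1, b + 1)} ∨
      ({u, v} : Set (ℤ × ℤ)) = {(a, b + 1), (a + 1, b + 1)} )

section Aux

lemma mem_V_iff (r : ℤ) (hr : 0 ≤ r) (p : ℤ × ℤ) :
    p ∈ V r ↔ |2 * p.1 - p.2| ≤ 2 * r ∧ |p.2| ≤ r := by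
  simp only [V, Finset.mem_filter, Finset.mem_product, Finset.mem_Icc, abs_le]
  omega

lemma mem_T_iff (r : ℤ) (p : ℤ × ℤ) :
    p ∈ T r ↔ p ∈ V r ∧ f p ≠ 0 ∧ (p.1, p.2 + 1) ∈ V r ∧ (p.1 + 1, p.2 + 1) ∈ V r := by
  simp [T, Finset.mem_filter]

lemma card_triVerts (p : ℤ × ℤ) : (triVerts p).card = 3 := by
  obtain ⟨a, b⟩ := p
  rw [triVerts]
  have h1 : ((a, b) : ℤ × ℤ) ∉ ({((a,b).1, (a,b).2 + 1), ((a,b).1 + 1, (a,b).2 + 1)} : Finset (ℤ × ℤ)) := by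
    simp only [Finset.mem_insert, Finset.mem_singleton, Prod.mk.injEq]
    omega
  have h2 : (((a,b).1, (a,b).2 + 1) : ℤ × ℤ) ∉ ({((a,b).1 + 1, (a,b).2 + 1)} : Finset (ℤ × ℤ)) := by
    simp only [Finset.mem_singleton, Prod.mk.injEq]
    omega
  rw [Finset.card_insert_of_notMem h1, Finset.card_insert_of_notMem h2, Finset.card_singleton]

lemma sum_triVerts (g : ℤ × ℤ → ℕ) (p : ℤ × ℤ) :
    ∑ v ∈ triVerts p, g v = g p + g (p.1, p.2 + 1) + g (p.1 + 1, p.2 + 1) := by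
  obtain ⟨a, b⟩ := p
  rw [triVerts]
  have h1 : ((a, b) : ℤ × ℤ) ∉ ({((a,b).1, (a,b).2 + 1), ((a,b).1 + 1, (a,b).2 + 1)} : Finset (ℤ × ℤ)) := by
    simp only [Finset.mem_insert, Finset.mem_singleton, Prod.mk.injEq]
    omega
  have h2 : (((a,b).1, (a,b).2 + 1) : ℤ × ℤ) ∉ ({((a,b).1 + 1, (a,b).2 + 1)} : Finset (ℤ × ℤ)) := by
    simp only [Finset.mem_singleton, Prod.mk.injEq]
    omega
  rw [Finset.sum_insert h1, Finset.sum_insert h2, Finset.sum_singleton, add_assoc]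

lemma triVerts_subset (r : ℤ) {p : ℤ × ℤ} (hp : p ∈ T r) : triVerts p ⊆ V r := by
  rw [mem_T_iff] at hp
  intro x hx
  simp only [triVerts, Finset.mem_insert, Finset.mem_singleton] at hx
  rcases hx with h | h | h <;> subst h
  · exact hp.1
  · exact hp.2.2.1
  · exact hp.2.2.2

lemma double_count (r : ℤ) (g : ℤ × ℤ → ℕ) :
    ∑ p ∈ T r, ∑ v ∈ triVerts p, g v = ∑ v ∈ V r, nTri r v * g v := by
  calc ∑ p ∈ T r, ∑ v ∈ triVerts p, g v
      = ∑ p ∈ T r, ∑ v ∈ V r, if v ∈ triVerts p then g v else 0 := by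
        refine Finset.sum_congr rfl fun p hp => ?_
        have h : (V r).filter (fun v => v ∈ triVerts p) = triVerts p := by
          ext v
          simp only [Finset.mem_filter]
          exact ⟨fun h => h.2, fun h => ⟨triVerts_subset r hp h, h⟩⟩
        rw [← Finset.sum_filter, h]
    _ = ∑ v ∈ V r, ∑ p ∈ T r, if v ∈ triVerts p then g v else 0 := Finset.sum_comm
    _ = ∑ v ∈ V r, nTri r v * g v := by
        refine Finset.sum_congr rfl fun v _ => ?_
        rw [← Finset.sum_filter, Finset.sum_const, nTri, smul_eq_mul]

lemma nTri_le_two (r : ℤ) (v : ℤ × ℤ) : nTri r v ≤ 2 := by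
  obtain ⟨x, y⟩ := v
  have hsub : (T r).filter (fun p => (x, y) ∈ triVerts p) ⊆
      (({(x, y), (x, y - 1), (x - 1, y - 1)} : Finset (ℤ × ℤ)).filter
        (fun p => (p.1 + p.2) % 3 ≠ 0)) := by
    intro p hp
    obtain ⟨a, b⟩ := p
    simp only [Finset.mem_filter, mem_T_iff, triVerts, Finset.mem_insert,
      Finset.mem_singleton, Prod.mk.injEq, f] at hp ⊢
    obtain ⟨⟨_, hf, _, _⟩, hv⟩ := hp
    exact ⟨by omega, hf⟩
  have htwo : ∀ c1 c2 : ℤ × ℤ,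
      (({(x, y), (x, y - 1), (x - 1, y - 1)} : Finset (ℤ × ℤ)).filter
        (fun p => (p.1 + p.2) % 3 ≠ 0)) ⊆ {c1, c2} → nTri r (x, y) ≤ 2 := by
    intro c1 c2 hc
    refine le_trans (Finset.card_le_card (hsub.trans hc)) ?_
    exact le_trans (Finset.card_insert_le _ _) (by simp)
  rcases (by omega : (x + y) % 3 = 0 ∨ (x + y) % 3 = 1 ∨ (x + y) % 3 = 2) with h | h | h
  · refine htwo (x, y - 1) (x - 1, y - 1) ?_
    intro p hp
    obtain ⟨a, b⟩ := p
    simp only [Finset.mem_filter, Finset.mem_insert, Finset.mem_singleton,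
      Prod.mk.injEq] at hp ⊢
    omega
  · refine htwo (x, y) (x - 1, y - 1) ?_
    intro p hp
    obtain ⟨a, b⟩ := p
    simp only [Finset.mem_filter, Finset.mem_insert, Finset.mem_singleton,
      Prod.mk.injEq] at hp ⊢
    omega
  · refine htwo (x, y) (x, y - 1) ?_
    intro p hp
    obtain ⟨a, b⟩ := p
    simp only [Finset.mem_filter, Finset.mem_insert, Finset.mem_singleton,
      Prod.mk.injEq] at hp ⊢
    omega

lemma nTri_ge_two (r : ℤ) (hr : 1 ≤ r) (v : ℤ × ℤ)
    (h1 : |2 * v.1 - v.2| ≤ 2 * r - 3) (h2 : |v.2| ≤ r - 1) : 2 ≤ nTri r v := by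
  obtain ⟨x, y⟩ := v
  simp only [abs_le] at h1 h2
  have hV : ∀ a b : ℤ, 2 * x - y - 3 ≤ 2 * a - b → 2 * a - b ≤ 2 * x - y + 3 →
      y - 1 ≤ b → b ≤ y + 1 → (a, b) ∈ V r := by
    intro a b u1 u2 u3 u4
    rw [mem_V_iff r (by omega)]
    constructor <;> rw [abs_le] <;> omega
  have hTmem : ∀ a b : ℤ,
      ((a = x ∧ b = y) ∨ (a = x ∧ b = y - 1) ∨ (a = x - 1 ∧ b = y - 1)) →
      (a + b) % 3 ≠ 0 → (a, b) ∈ T r := by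
    intro a b hab hf
    rw [mem_T_iff]
    refine ⟨hV a b (by omega) (by omega) (by omega) (by omega), ?_,
      hV a (b + 1) (by omega) (by omega) (by omega) (by omega),
      hV (a + 1) (b + 1) (by omega) (by omega) (by omega) (by omega)⟩
    simpa [f] using hf
  have htwo : ∀ p1 p2 : ℤ × ℤ, p1 ≠ p2 →
      p1 ∈ (T r).filter (fun p => (x, y) ∈ triVerts p) →
      p2 ∈ (T r).filter (fun p => (x, y) ∈ triVerts p) → 2 ≤ nTri r (x, y) := by
    intro p1 p2 hne hm1 hm2
    have hsub : ({p1, p2} : Finset (ℤ × ℤ)) ⊆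
        (T r).filter (fun p => (x, y) ∈ triVerts p) :=
      Finset.insert_subset hm1 (Finset.singleton_subset_iff.mpr hm2)
    calc 2 = ({p1, p2} : Finset (ℤ × ℤ)).card := by
          rw [Finset.card_insert_of_notMem (by simpa using hne), Finset.card_singleton]
      _ ≤ _ := Finset.card_le_card hsub
  have hmemtv : ∀ a b : ℤ,
      ((a = x ∧ b = y) ∨ (a = x ∧ b = y - 1) ∨ (a = x - 1 ∧ b = y - 1)) →
      (x, y) ∈ triVerts (a, b) := by
    intro a b hab
    simp only [triVerts, Finset.mem_insert, Finset.mem_singleton, Prod.mk.injEq]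
    omega
  rcases (by omega : (x + y) % 3 = 0 ∨ (x + y) % 3 = 1 ∨ (x + y) % 3 = 2) with h | h | h
  · refine htwo (x, y - 1) (x - 1, y - 1) (by simp only [ne_eq, Prod.mk.injEq]; omega)
      (Finset.mem_filter.mpr ⟨hTmem _ _ (by omega) (by omega), hmemtv _ _ (by omega)⟩)
      (Finset.mem_filter.mpr ⟨hTmem _ _ (by omega) (by omega), hmemtv _ _ (by omega)⟩)
  · refine htwo (x, y) (x - 1, y - 1) (by simp only [ne_eq, Prod.mk.injEq]; omega)
      (Finset.mem_filter.mpr ⟨hTmem _ _ (by omega) (by omega), hmemtv _ _ (by omega)⟩)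
      (Finset.mem_filter.mpr ⟨hTmem _ _ (by omega) (by omega), hmemtv _ _ (by omega)⟩)
  · refine htwo (x, y) (x, y - 1) (by simp only [ne_eq, Prod.mk.injEq]; omega)
      (Finset.mem_filter.mpr ⟨hTmem _ _ (by omega) (by omega), hmemtv _ _ (by omega)⟩)
      (Finset.mem_filter.mpr ⟨hTmem _ _ (by omega) (by omega), hmemtv _ _ (by omega)⟩)

end Aux

section Aux2

lemma tri_sum_le (r : ℤ) (M : ℕ) (d : ℤ × ℤ → ℕ)
    (hedge : ∀ u v : ℤ × ℤ, Adj r u v → d u + d v ≤ M)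
    {p : ℤ × ℤ} (hp : p ∈ T r) : ∑ v ∈ triVerts p, d v ≤ 3 * M / 2 := by
  rw [mem_T_iff] at hp
  obtain ⟨hV, hf, hq1, hq2⟩ := hp
  have hf' : (p.1 + p.2) % 3 ≠ 0 := hf
  have e1 : d p + d (p.1, p.2 + 1) ≤ M :=
    hedge _ _ ⟨hV, hq1, p.1, p.2, hf', Or.inl rfl⟩
  have e2 : d p + d (p.1 + 1, p.2 + 1) ≤ M :=
    hedge _ _ ⟨hV, hq2, p.1, p.2, hf', Or.inr (Or.inl rfl)⟩
  have e3 : d (p.1, p.2 + 1) + d (p.1 + 1, p.2 + 1) ≤ M :=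
    hedge _ _ ⟨hq1, hq2, p.1, p.2, hf', Or.inr (Or.inr rfl)⟩
  rw [sum_triVerts]
  omega

lemma V_card_lower (r : ℤ) (hr : 1 ≤ r) : 2 * r * (2 * r + 1) ≤ ((V r).card : ℤ) := by
  have hinj := Finset.card_le_card_of_injOn
    (f := fun q : ℤ × ℤ => (q.1 - r + q.2 / 2, q.2))
    (s := Finset.Icc 1 (2 * r) ×ˢ Finset.Icc (-r) r) (t := V r)
    (by
      intro q hq
      simp only [Finset.mem_coe, Finset.mem_product, Finset.mem_Icc] at hq ⊢
      rw [mem_V_iff r (by omega)]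
      constructor <;> simp only <;> rw [abs_le] <;> omega)
    (by
      intro q hq q' hq' h
      simp only [Prod.mk.injEq] at h
      have : q.1 = q'.1 := by omega
      exact Prod.ext this h.2)
  rw [Finset.card_product, Int.card_Icc, Int.card_Icc] at hinj
  have h2 := (Nat.cast_le (α := ℤ)).mpr hinj
  rw [Nat.cast_mul, Int.toNat_of_nonneg (by omega : (0:ℤ) ≤ 2 * r + 1 - 1),
    Int.toNat_of_nonneg (by omega : (0:ℤ) ≤ r + 1 - -r)] at h2
  calc 2 * r * (2 * r + 1) = (2 * r + 1 - 1) * (r + 1 - -r) := by ring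
    _ ≤ ((V r).card : ℤ) := h2

lemma Vex_card_upper (r : ℤ) (hr : 1 ≤ r) : ((Vex r).card : ℤ) ≤ 14 * r - 3 := by
  classical
  set A := (V r).filter (fun v => v.2 = r ∨ v.2 = -r) with hA
  set B := (V r).filter (fun v => -(r - 1) ≤ v.2 ∧ v.2 ≤ r - 1 ∧ 2 * r - 2 ≤ 2 * v.1 - v.2)
    with hB
  set C := (V r).filter (fun v => -(r - 1) ≤ v.2 ∧ v.2 ≤ r - 1 ∧ 2 * v.1 - v.2 ≤ -(2 * r - 2))
    with hC
  have hsub : Vex r ⊆ A ∪ B ∪ C := by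
    intro v hv
    obtain ⟨hvV, hn⟩ := Finset.mem_filter.mp hv
    have hni : ¬(|2 * v.1 - v.2| ≤ 2 * r - 3 ∧ |v.2| ≤ r - 1) := by
      intro h
      exact absurd (nTri_ge_two r hr v h.1 h.2) (by omega)
    obtain ⟨hb1, hb2⟩ := (mem_V_iff r (by omega) v).mp hvV
    rw [abs_le] at hb1 hb2
    rw [not_and_or, abs_le, abs_le, not_and_or, not_and_or] at hni
    have hP : (v.2 = r ∨ v.2 = -r) ∨
        (-(r - 1) ≤ v.2 ∧ v.2 ≤ r - 1 ∧ 2 * r - 2 ≤ 2 * v.1 - v.2) ∨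
        (-(r - 1) ≤ v.2 ∧ v.2 ≤ r - 1 ∧ 2 * v.1 - v.2 ≤ -(2 * r - 2)) := by omega
    rcases hP with h | h | h
    · exact Finset.mem_union.mpr (Or.inl (Finset.mem_union.mpr (Or.inl
        (Finset.mem_filter.mpr ⟨hvV, h⟩))))
    · exact Finset.mem_union.mpr (Or.inl (Finset.mem_union.mpr (Or.inr
        (Finset.mem_filter.mpr ⟨hvV, h⟩))))
    · exact Finset.mem_union.mpr (Or.inr (Finset.mem_filter.mpr ⟨hvV, h⟩))
  have hAcard : (A.card : ℤ) ≤ 6 * r + 1 := by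
    have hinj := Finset.card_le_card_of_injOn (f := fun v : ℤ × ℤ => v.1 + v.2)
      (s := A) (t := Finset.Icc (-(3 * r)) (3 * r))
      (by
        intro v hv
        simp only [Finset.mem_coe, hA, Finset.mem_filter, mem_V_iff r (by omega : (0:ℤ) ≤ r), abs_le] at hv
        simp only [Finset.mem_coe, Finset.mem_Icc]
        omega)
      (by
        intro v hv w hw h
        simp only [Finset.mem_coe, hA, Finset.mem_filter,
          mem_V_iff r (by omega : (0:ℤ) ≤ r), abs_le] at hv hw
        have h' : v.1 + v.2 = w.1 + w.2 := h
        have h1 : v.1 = w.1 ∧ v.2 = w.2 := by omega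
        exact Prod.ext h1.1 h1.2)
    rw [Int.card_Icc] at hinj
    have h2 := (Nat.cast_le (α := ℤ)).mpr hinj
    rw [Int.toNat_of_nonneg (by omega : (0:ℤ) ≤ 3 * r + 1 - -(3 * r))] at h2
    omega
  have hBcard : (B.card : ℤ) ≤ 4 * r - 2 := by
    have hinj := Finset.card_le_card_of_injOn
      (f := fun v : ℤ × ℤ => (v.2, decide (2 * v.1 - v.2 = 2 * r)))
      (s := B) (t := Finset.Icc (-(r - 1)) (r - 1) ×ˢ (Finset.univ : Finset Bool))
      (by
        intro v hv
        simp only [Finset.mem_coe, hB, Finset.mem_filter] at hv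
        simp only [Finset.mem_coe, Finset.mem_product, Finset.mem_Icc, Finset.mem_univ, and_true]
        omega)
      (by
        intro v hv w hw h
        simp only [Finset.mem_coe, hB, Finset.mem_filter,
          mem_V_iff r (by omega : (0:ℤ) ≤ r), abs_le] at hv hw
        simp only [Prod.mk.injEq] at h
        have hiff := decide_eq_decide.mp h.2
        have h1 : v.1 = w.1 ∧ v.2 = w.2 := by omega
        exact Prod.ext h1.1 h1.2)
    rw [Finset.card_product, Int.card_Icc] at hinj
    simp only [Finset.card_univ, Fintype.card_bool] at hinj
    have h2 := (Nat.cast_le (α := ℤ)).mpr hinj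
    rw [Nat.cast_mul, Int.toNat_of_nonneg (by omega : (0:ℤ) ≤ r - 1 + 1 - -(r - 1))] at h2
    push_cast at h2
    omega
  have hCcard : (C.card : ℤ) ≤ 4 * r - 2 := by
    have hinj := Finset.card_le_card_of_injOn
      (f := fun v : ℤ × ℤ => (v.2, decide (2 * v.1 - v.2 = -(2 * r))))
      (s := C) (t := Finset.Icc (-(r - 1)) (r - 1) ×ˢ (Finset.univ : Finset Bool))
      (by
        intro v hv
        simp only [Finset.mem_coe, hC, Finset.mem_filter] at hv
        simp only [Finset.mem_coe, Finset.mem_product, Finset.mem_Icc, Finset.mem_univ, and_true]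
        omega)
      (by
        intro v hv w hw h
        simp only [Finset.mem_coe, hC, Finset.mem_filter,
          mem_V_iff r (by omega : (0:ℤ) ≤ r), abs_le] at hv hw
        simp only [Prod.mk.injEq] at h
        have hiff := decide_eq_decide.mp h.2
        have h1 : v.1 = w.1 ∧ v.2 = w.2 := by omega
        exact Prod.ext h1.1 h1.2)
    rw [Finset.card_product, Int.card_Icc] at hinj
    simp only [Finset.card_univ, Fintype.card_bool] at hinj
    have h2 := (Nat.cast_le (α := ℤ)).mpr hinj
    rw [Nat.cast_mul, Int.toNat_of_nonneg (by omega : (0:ℤ) ≤ r - 1 + 1 - -(r - 1))] at h2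
    push_cast at h2
    omega
  have hcard := Finset.card_le_card hsub
  have hu : (A ∪ B ∪ C).card ≤ A.card + B.card + C.card :=
    le_trans (Finset.card_union_le _ _)
      (add_le_add_left (Finset.card_union_le A B) _)
  have := le_trans hcard hu
  have h3 := (Nat.cast_le (α := ℤ)).mpr this
  push_cast at h3
  omega

end Aux2

/-- **Theorem 2 (DoF converse, combinatorial form).** If `d : V(r) → ℕ`
satisfies `d_v ≤ M` for all `v ∈ V(r)` and `d_u + d_v ≤ M` on every edge, then
the average `(1/|V(r)|)·Σ_{v ∈ V(r)} d_v` is at most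
`⌊3M/2⌋/3 + 7M/√(|V(r)|)` as real numbers (which equals
`M/2 + 7M/√(|V(r)|)` for even `M` and `M/2 − 1/6 + 7M/√(|V(r)|)` for odd `M`). -/
theorem dof_converse (r : ℤ) (hr : 1 ≤ r) (M : ℕ) (hM : 1 ≤ M)
    (d : ℤ × ℤ → ℕ)
    (hd : ∀ v ∈ V r, d v ≤ M)
    (hedge : ∀ u v : ℤ × ℤ, Adj r u v → d u + d v ≤ M) :
    (∑ v ∈ V r, (d v : ℝ)) / ((V r).card : ℝ) ≤
      ((3 * M / 2 : ℕ) : ℝ) / 3 + 7 * M / Real.sqrt ((V r).card : ℝ) := by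
  classical
  set N := (V r).card with hN
  set K := 3 * M / 2 with hK
  set S := ∑ v ∈ V r, d v with hS
  -- Step 1: triangle bound
  have hA : ∑ v ∈ V r, nTri r v * d v ≤ (T r).card * K := by
    rw [← double_count]
    calc ∑ p ∈ T r, ∑ v ∈ triVerts p, d v ≤ ∑ _p ∈ T r, K :=
          Finset.sum_le_sum fun p hp => tri_sum_le r M d hedge hp
      _ = (T r).card * K := by rw [Finset.sum_const, smul_eq_mul]
  -- Step 2: 3|T| ≤ 2N
  have hB : 3 * (T r).card ≤ 2 * N := by
    calc 3 * (T r).card = ∑ _p ∈ T r, 3 := by rw [Finset.sum_const, smul_eq_mul, mul_comm]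
      _ = ∑ p ∈ T r, ∑ _v ∈ triVerts p, 1 := by
          refine Finset.sum_congr rfl fun p _ => ?_
          rw [Finset.sum_const, smul_eq_mul, mul_one, card_triVerts]
      _ = ∑ v ∈ V r, nTri r v * 1 := double_count r (fun _ => 1)
      _ ≤ ∑ _v ∈ V r, 2 := Finset.sum_le_sum (fun v _ => by
          have := nTri_le_two r v; omega)
      _ = 2 * N := by rw [Finset.sum_const, smul_eq_mul, mul_comm]
  -- Step 3: boundary contribution
  have hC : ∑ v ∈ V r, (2 - nTri r v) * d v ≤ 2 * M * (Vex r).card := by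
    calc ∑ v ∈ V r, (2 - nTri r v) * d v
        = ∑ v ∈ (V r).filter (fun v => nTri r v < 2), (2 - nTri r v) * d v
          + ∑ v ∈ (V r).filter (fun v => ¬ nTri r v < 2), (2 - nTri r v) * d v :=
          (Finset.sum_filter_add_sum_filter_not _ _ _).symm
      _ = ∑ v ∈ Vex r, (2 - nTri r v) * d v := by
          have hz : ∑ v ∈ (V r).filter (fun v => ¬ nTri r v < 2), (2 - nTri r v) * d v = 0 :=
            Finset.sum_eq_zero (fun v hv => by
              have h2 := (Finset.mem_filter.mp hv).2
              have h3 : 2 - nTri r v = 0 := by omega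
              rw [h3, zero_mul])
          rw [hz, add_zero]
          rfl
      _ ≤ ∑ _v ∈ Vex r, 2 * M := Finset.sum_le_sum (fun v hv => by
          have hvV : v ∈ V r := (Finset.mem_filter.mp hv).1
          have hdv := hd v hvV
          have := nTri_le_two r v
          exact Nat.mul_le_mul (by omega) hdv)
      _ = 2 * M * (Vex r).card := by rw [Finset.sum_const, smul_eq_mul, mul_comm]
  -- split
  have hSplit : 2 * S = ∑ v ∈ V r, nTri r v * d v + ∑ v ∈ V r, (2 - nTri r v) * d v := by
    rw [← Finset.sum_add_distrib, hS, Finset.mul_sum]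
    refine Finset.sum_congr rfl fun v _ => ?_
    have h2 := nTri_le_two r v
    rw [← add_mul, Nat.add_sub_cancel' h2]
  have hmain : 6 * S ≤ 2 * N * K + 6 * M * (Vex r).card := by
    have h1 : 3 * ((T r).card * K) ≤ 2 * N * K := by
      rw [← mul_assoc]
      exact Nat.mul_le_mul_right K hB
    calc 6 * S = 3 * (2 * S) := by ring
      _ = 3 * (∑ v ∈ V r, nTri r v * d v + ∑ v ∈ V r, (2 - nTri r v) * d v) := by rw [hSplit]
      _ ≤ 3 * ((T r).card * K + 2 * M * (Vex r).card) :=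
          Nat.mul_le_mul_left 3 (add_le_add hA hC)
      _ = 3 * ((T r).card * K) + 3 * (2 * M * (Vex r).card) := by ring
      _ ≤ 2 * N * K + 6 * M * (Vex r).card := add_le_add h1 (le_of_eq (by ring))
  -- cardinality estimates
  have hNlow : 2 * r * (2 * r + 1) ≤ (N : ℤ) := V_card_lower r hr
  have hVexB : ((Vex r).card : ℤ) ≤ 14 * r - 3 := Vex_card_upper r hr
  have hNpos : 0 < N := by
    by_contra h
    push_neg at h
    interval_cases N
    · simp at hNlow; nlinarith
  have hE2 : ((Vex r).card : ℤ) ^ 2 ≤ 49 * (N : ℤ) := by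
    have h0 : (0:ℤ) ≤ ((Vex r).card : ℤ) := Int.ofNat_nonneg _
    nlinarith [hVexB, hNlow, hr, h0]
  -- real analysis
  have hNR : (0:ℝ) < (N : ℝ) := by exact_mod_cast hNpos
  set x := Real.sqrt (N : ℝ) with hx
  have hxpos : 0 < x := Real.sqrt_pos.mpr hNR
  have hNx : ((N : ℝ)) = x * x := (Real.mul_self_sqrt (le_of_lt hNR)).symm
  have hE : ((Vex r).card : ℝ) ≤ 7 * x := by
    have h2 : ((Vex r).card : ℝ) ^ 2 ≤ 49 * (N : ℝ) := by exact_mod_cast hE2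
    rw [hNx] at h2
    nlinarith [h2, hxpos, Nat.cast_nonneg (α := ℝ) (Vex r).card]
  have hmainR : 6 * (S : ℝ) ≤ 2 * (N : ℝ) * (K : ℝ) + 6 * (M : ℝ) * ((Vex r).card : ℝ) := by
    exact_mod_cast hmain
  have hcastS : (∑ v ∈ V r, (d v : ℝ)) = (S : ℝ) := by
    rw [hS]
    push_cast
    rfl
  rw [hcastS, div_le_iff₀ hNR]
  have hexp : (((K : ℕ) : ℝ) / 3 + 7 * (M : ℝ) / x) * (N : ℝ)
      = (K : ℝ) * (x * x) / 3 + 7 * (M : ℝ) * x := by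
    rw [hNx]
    field_simp
  rw [hexp]
  have hME : (M : ℝ) * ((Vex r).card : ℝ) ≤ (M : ℝ) * (7 * x) :=
    mul_le_mul_of_nonneg_left hE (Nat.cast_nonneg M)
  nlinarith [hmainR, hME]
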